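/- arXiv:1712.02468 — 3 statements merged into one kernel-verified Lean document; each statement's English description precedes it below -/
import Mathlib

section
/- For real x with |x| < 1, real a > 0, and any angle φ, one has the power series identity (1 − 2x cos φ + x²)^{−a/2} = ∑_{n=0}^∞ (∑_{k+l=n} α_k α_l e^{iφ(k−l)}) x^n, where α_k are the Taylor coefficients of (1−z)^{−a/2}. -/
open Complex

open Filter Finset

lemma slit_of_ball {w : ℂ} (hw : w ∈ Metric.ball (0:ℂ) 1) : (1 - w) ∈ Complex.slitPlane := by
  rw [Metric.mem_ball, dist_zero_right] at hw
  exact Complex.mem_slitPlane_iff.2 (Or.inl (by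
    have := Complex.abs_re_le_norm w
    simp only [Complex.sub_re, Complex.one_re]
    have : |w.re| < 1 := lt_of_le_of_lt this hw
    linarith [abs_lt.1 this |>.2]))

lemma iter_deriv_cpow (s : ℂ) (n : ℕ) :
    Set.EqOn (iteratedDeriv n (fun w : ℂ => (1 - w) ^ s))
      (fun w => ((-1 : ℂ) ^ n * ∏ i ∈ Finset.range n, (s - i)) * (1 - w) ^ (s - n))
      (Metric.ball (0:ℂ) 1) := by
  induction n with
  | zero => intro w hw; simp
  | succ n ih =>
    intro w hw
    rw [iteratedDeriv_succ]
    have heq : iteratedDeriv n (fun w : ℂ => (1 - w) ^ s)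
        =ᶠ[nhds w] (fun w => ((-1 : ℂ) ^ n * ∏ i ∈ Finset.range n, (s - i)) * (1 - w) ^ (s - n)) :=
      Filter.eventuallyEq_of_mem (Metric.isOpen_ball.mem_nhds hw) ih
    rw [heq.deriv_eq]
    have h1 : HasDerivAt (fun w : ℂ => 1 - w) (-1) w := (hasDerivAt_id w).const_sub 1
    have h2 := (h1.cpow_const (c := s - n) (slit_of_ball hw)).const_mul
      ((-1 : ℂ) ^ n * ∏ i ∈ Finset.range n, (s - i))
    rw [h2.deriv]
    rw [show (s - ((n : ℕ) + 1 : ℕ)) = s - n - 1 by push_cast; ring]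
    rw [Finset.prod_range_succ]
    ring

lemma binom_hasSum (s : ℂ) {z : ℂ} (hz : ‖z‖ < 1) :
    HasSum (fun k : ℕ => ((-1 : ℂ) ^ k * ∏ i ∈ Finset.range k, (s - i)) / (Nat.factorial k) * z ^ k)
      ((1 - z) ^ s) := by
  have hdiff : DifferentiableOn ℂ (fun w : ℂ => (1 - w) ^ s) (Metric.ball 0 1) := by
    intro w hw
    have h1 : HasDerivAt (fun w : ℂ => 1 - w) (-1) w := (hasDerivAt_id w).const_sub 1
    exact (h1.cpow_const (c := s) (slit_of_ball hw)).differentiableAt.differentiableWithinAt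
  have hzball : z ∈ Metric.ball (0:ℂ) 1 := by
    rw [Metric.mem_ball, dist_zero_right]; exact hz
  have H := Complex.hasSum_taylorSeries_on_ball hdiff hzball
  have h0 : (0:ℂ) ∈ Metric.ball (0:ℂ) 1 := by simp
  have key : (fun k : ℕ => ((-1 : ℂ) ^ k * ∏ i ∈ Finset.range k, (s - i)) / (Nat.factorial k) * z ^ k)
      = fun n : ℕ => ((Nat.factorial n : ℂ))⁻¹ • (z - 0) ^ n • iteratedDeriv n (fun w : ℂ => (1 - w) ^ s) 0 := by
    funext n
    rw [iter_deriv_cpow s n h0]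
    simp only [smul_eq_mul, sub_zero, Complex.one_cpow, show (1:ℂ) - 0 = 1 by ring]
    field_simp
  rw [key]
  exact H

lemma alpha_rec (a : ℝ) (α : ℕ → ℝ)
    (hα : ∀ k, α k = (-1) ^ k * (∏ i ∈ Finset.range k, (-(a / 2) - i)) / (Nat.factorial k))
    (n : ℕ) : α (n + 1) = α n * ((a / 2 + n) / (n + 1)) := by
  rw [hα, hα, Finset.prod_range_succ, Nat.factorial_succ]
  have h1 : ((Nat.factorial n : ℝ)) ≠ 0 := Nat.cast_ne_zero.2 (Nat.factorial_ne_zero n)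
  have h2 : ((n : ℝ) + 1) ≠ 0 := by positivity
  push_cast
  field_simp
  ring

lemma summable_norm_term (a : ℝ) (ha : 0 < a) (α : ℕ → ℝ)
    (hα : ∀ k, α k = (-1) ^ k * (∏ i ∈ Finset.range k, (-(a / 2) - i)) / (Nat.factorial k))
    {z : ℂ} (hz : ‖z‖ < 1) : Summable (fun k : ℕ => ‖((α k : ℝ) : ℂ) * z ^ k‖) := by
  set r : ℝ := (1 + ‖z‖) / 2 with hr
  have hr1 : r < 1 := by rw [hr]; linarith
  have hzr : ‖z‖ < r := by rw [hr]; linarith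
  apply summable_of_ratio_norm_eventually_le hr1
  have T : Filter.Tendsto (fun n : ℕ => (a / 2 + n) / (n + 1) * ‖z‖) Filter.atTop (nhds ‖z‖) := by
    have T0 := tendsto_one_div_add_atTop_nhds_zero_nat (𝕜 := ℝ)
    have he : (fun n : ℕ => (a / 2 + n) / (n + 1) * ‖z‖)
        = fun n : ℕ => (1 + (a / 2 - 1) * (1 / (n + 1))) * ‖z‖ := by
      funext n
      have hn : ((n : ℝ) + 1) ≠ 0 := by positivity
      have : (a / 2 + (n : ℝ)) / (n + 1) = 1 + (a / 2 - 1) * (1 / (n + 1)) := by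
        field_simp
        ring
      rw [this]
    rw [he]
    have := ((T0.const_mul (a / 2 - 1)).const_add 1).mul_const ‖z‖
    simpa using this
  have hev : ∀ᶠ n : ℕ in Filter.atTop, (a / 2 + n) / (n + 1) * ‖z‖ < r := T.eventually_lt_const hzr
  filter_upwards [hev] with n hn
  rw [norm_norm, norm_norm]
  have hkey : ((α (n + 1) : ℝ) : ℂ) * z ^ (n + 1)
      = (((α n : ℝ) : ℂ) * z ^ n) * ((((a / 2 + n) / (n + 1) : ℝ) : ℂ) * z) := by
    rw [alpha_rec a α hα n]
    push_cast
    ring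
  rw [hkey, norm_mul]
  have hq : ‖(((a / 2 + n) / (n + 1) : ℝ) : ℂ) * z‖ = (a / 2 + n) / (n + 1) * ‖z‖ := by
    rw [norm_mul, Complex.norm_real, Real.norm_of_nonneg (by positivity)]
  rw [hq, mul_comm]
  exact mul_le_mul_of_nonneg_right hn.le (norm_nonneg _)

lemma value_eq (a φ x : ℝ) (hx : |x| < 1) :
    (1 - (x : ℂ) * Complex.exp (Complex.I * φ)) ^ (((-(a / 2) : ℝ)) : ℂ)
      * (1 - (x : ℂ) * Complex.exp (-(Complex.I * φ))) ^ (((-(a / 2) : ℝ)) : ℂ)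
      = (((1 - 2 * x * Real.cos φ + x ^ 2) ^ (-(a / 2)) : ℝ) : ℂ) := by
  set s : ℂ := (((-(a / 2) : ℝ)) : ℂ) with hs
  set u : ℂ := 1 - (x : ℂ) * Complex.exp (Complex.I * φ) with hu
  have hre : u.re = 1 - x * Real.cos φ := by
    simp [hu, Complex.exp_re, Complex.mul_re, Complex.mul_im]
  have him : u.im = -(x * Real.sin φ) := by
    simp [hu, Complex.exp_im, Complex.exp_re, Complex.mul_re, Complex.mul_im]
  have hxc : x * Real.cos φ < 1 := by
    calc x * Real.cos φ ≤ |x * Real.cos φ| := le_abs_self _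
      _ = |x| * |Real.cos φ| := abs_mul _ _
      _ ≤ |x| * 1 := mul_le_mul_of_nonneg_left (Real.abs_cos_le_one φ) (abs_nonneg x)
      _ < 1 := by linarith
  have hrepos : 0 < u.re := by rw [hre]; linarith
  have hu0 : u ≠ 0 := by
    intro h
    rw [h] at hrepos
    simp at hrepos
  have harg : u.arg ≠ Real.pi := by
    intro h
    have := (Complex.arg_eq_pi_iff.1 h).1
    linarith
  have hconj : (starRingEnd ℂ) u = 1 - (x : ℂ) * Complex.exp (-(Complex.I * φ)) := by
    rw [hu]
    rw [map_sub, map_one, map_mul, Complex.conj_ofReal, ← Complex.exp_conj]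
    congr 2
    simp [map_mul, Complex.conj_ofReal]
  have hcne : (starRingEnd ℂ) u ≠ 0 := by simpa using hu0
  have hnormSq : Complex.normSq u = 1 - 2 * x * Real.cos φ + x ^ 2 := by
    rw [Complex.normSq_apply, hre, him]
    have hsq := Real.sin_sq_add_cos_sq φ
    nlinarith [hsq]
  have hpos : 0 < 1 - 2 * x * Real.cos φ + x ^ 2 := by
    rw [← hnormSq]
    exact Complex.normSq_pos.2 hu0
  rw [← hconj]
  rw [Complex.cpow_def_of_ne_zero hu0, Complex.cpow_def_of_ne_zero hcne]
  rw [Complex.log_conj u harg, ← Complex.exp_add]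
  have hkey : Complex.log u * s + (starRingEnd ℂ) (Complex.log u) * s
      = ((2 * Real.log ‖u‖ * (-(a / 2)) : ℝ) : ℂ) := by
    rw [← add_mul, Complex.add_conj, Complex.log_re, hs]
    push_cast
    ring
  rw [hkey, ← Complex.ofReal_exp]
  congr 1
  rw [Real.rpow_def_of_pos hpos]
  congr 1
  have habs : 1 - 2 * x * Real.cos φ + x ^ 2 = ‖u‖ ^ 2 := by
    rw [Complex.sq_norm, hnormSq]
  rw [habs, Real.log_pow]
  push_cast
  ring

/-- For |x| < 1, a > 0 and any angle φ:
(1 − 2x cos φ + x²)^{−a/2} = ∑_{n≥0} (∑_{k+l=n} α_k α_l e^{iφ(k−l)}) x^n,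
where α_k are the Taylor coefficients of (1−z)^{−a/2}. -/
theorem series_expansion (a : ℝ) (ha : 0 < a) (φ x : ℝ) (hx : |x| < 1) (α : ℕ → ℝ)
    (hα : ∀ k, α k = (-1) ^ k * (∏ i ∈ Finset.range k, (-(a / 2) - i)) / (Nat.factorial k)) :
    HasSum
      (fun n : ℕ =>
        (∑ k ∈ Finset.range (n + 1),
          ((α k * α (n - k) : ℝ) : ℂ)
            * Complex.exp (Complex.I * φ * ((k : ℂ) - ((n : ℂ) - k)))) * (x : ℂ) ^ n)
      (((1 - 2 * x * Real.cos φ + x ^ 2) ^ (-(a / 2)) : ℝ) : ℂ) := by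
  set s : ℂ := (((-(a / 2) : ℝ)) : ℂ) with hs
  set z1 : ℂ := (x : ℂ) * Complex.exp (Complex.I * φ) with hz1def
  set z2 : ℂ := (x : ℂ) * Complex.exp (-(Complex.I * φ)) with hz2def
  have hexp1 : ‖Complex.exp (Complex.I * φ)‖ = 1 := by
    rw [Complex.norm_exp]
    simp
  have hexp2 : ‖Complex.exp (-(Complex.I * φ))‖ = 1 := by
    rw [Complex.norm_exp]
    simp
  have hz1 : ‖z1‖ < 1 := by
    rw [hz1def, norm_mul, hexp1, mul_one, Complex.norm_real, Real.norm_eq_abs]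
    exact hx
  have hz2 : ‖z2‖ < 1 := by
    rw [hz2def, norm_mul, hexp2, mul_one, Complex.norm_real, Real.norm_eq_abs]
    exact hx
  have hAfun : ∀ (z : ℂ) (k : ℕ), ((-1 : ℂ) ^ k * ∏ i ∈ Finset.range k, (s - i))
      / (Nat.factorial k) * z ^ k = ((α k : ℝ) : ℂ) * z ^ k := by
    intro z k
    congr 1
    rw [hα k, hs]
    push_cast
    ring
  have hA : HasSum (fun k : ℕ => ((α k : ℝ) : ℂ) * z1 ^ k) ((1 - z1) ^ s) := by
    have := binom_hasSum s hz1
    rwa [funext (hAfun z1)] at this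
  have hB : HasSum (fun k : ℕ => ((α k : ℝ) : ℂ) * z2 ^ k) ((1 - z2) ^ s) := by
    have := binom_hasSum s hz2
    rwa [funext (hAfun z2)] at this
  have hprod := hasSum_sum_range_mul_of_summable_norm
    (summable_norm_term a ha α hα hz1) (summable_norm_term a ha α hα hz2)
  rw [hA.tsum_eq, hB.tsum_eq] at hprod
  have hval : (1 - z1) ^ s * (1 - z2) ^ s
      = (((1 - 2 * x * Real.cos φ + x ^ 2) ^ (-(a / 2)) : ℝ) : ℂ) := value_eq a φ x hx
  rw [hval] at hprod
  have hterm : ∀ n : ℕ,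
      (∑ k ∈ Finset.range (n + 1),
          ((α k * α (n - k) : ℝ) : ℂ)
            * Complex.exp (Complex.I * φ * ((k : ℂ) - ((n : ℂ) - k)))) * (x : ℂ) ^ n
      = ∑ k ∈ Finset.range (n + 1),
          (((α k : ℝ) : ℂ) * z1 ^ k) * (((α (n - k) : ℝ) : ℂ) * z2 ^ (n - k)) := by
    intro n
    rw [Finset.sum_mul]
    refine Finset.sum_congr rfl fun k hk => ?_
    have hkn : k ≤ n := Nat.lt_succ_iff.1 (Finset.mem_range.1 hk)
    have hcast : ((n - k : ℕ) : ℂ) = (n : ℂ) - k := by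
      push_cast [hkn]
      ring
    rw [hz1def, hz2def, mul_pow, mul_pow, ← Complex.exp_nat_mul, ← Complex.exp_nat_mul,
      Complex.ofReal_mul]
    have hexp : Complex.exp ((k : ℂ) * (Complex.I * φ))
        * Complex.exp (((n - k : ℕ) : ℂ) * (-(Complex.I * φ)))
        = Complex.exp (Complex.I * φ * ((k : ℂ) - ((n : ℂ) - k))) := by
      rw [← Complex.exp_add]
      congr 1
      rw [hcast]
      ring
    have hx' : (x : ℂ) ^ k * (x : ℂ) ^ (n - k) = (x : ℂ) ^ n := by
      rw [← pow_add, Nat.add_sub_cancel' hkn]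
    rw [← hexp, ← hx']
    ring
  rwa [funext hterm]
end

section
/- For a = 2, N ≥ 2, θ = 2π/N, and 0 ≤ p ≤ N−1, the sum ξ_p(1) = (1/2) ∑_{j=1}^{N−1} sin(πj(2p+1)/N)/sin(πj/N) equals (N − (2p+1))/2. In particular ξ_p(1) ≠ 0 if and only if p ≠ (N−1)/2. -/
open Finset Real

lemma dirichlet_ker (m : ℕ) (x : ℝ) :
    Real.sin ((2 * m + 1) * x) =
      Real.sin x * (1 + 2 * ∑ k ∈ Finset.Icc 1 m, Real.cos (2 * k * x)) := by
  induction m with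
  | zero => simp
  | succ n ih =>
    rw [Finset.sum_Icc_succ_top (by omega)]
    push_cast
    have A : Real.sin ((2 * ((n:ℝ) + 1) + 1) * x)
        = Real.sin (((2 * (n:ℝ) + 1) * x) + 2 * x) := by congr 1; ring
    have B : Real.cos (2 * ((n:ℝ) + 1) * x)
        = Real.cos (((2 * (n:ℝ) + 1) * x) + x) := by congr 1; ring
    rw [A, B, Real.sin_add, Real.cos_add, Real.sin_two_mul, Real.cos_two_mul]
    push_cast at ih
    linear_combination ih + 2 * Real.sin ((2 * (n:ℝ) + 1) * x) * (Real.sin_sq_add_cos_sq x)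

lemma cos_sum_range (N k : ℕ) (hN : 2 ≤ N) (hk1 : 1 ≤ k) (hk2 : k ≤ N - 1) :
    ∑ j ∈ Finset.range N, Real.cos (2 * Real.pi * j * k / N) = 0 := by
  have hN0 : (N:ℝ) ≠ 0 := by positivity
  set θ : ℝ := 2 * Real.pi * k / N with hθ
  set ζ : ℂ := Complex.exp (θ * Complex.I) with hζ
  have hz1 : ζ ≠ 1 := by
    rw [hζ, Ne, Complex.exp_eq_one_iff]
    rintro ⟨n, hn⟩
    have him := congrArg Complex.im hn
    simp [Complex.mul_im] at him
    -- him : θ = n * (2 * π)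
    have hkN : (k:ℝ) = n * N := by
      rw [hθ] at him
      field_simp at him
      have hπ := Real.pi_ne_zero
      nlinarith [Real.pi_pos, him]
    have hkZ : (k:ℤ) = n * N := by exact_mod_cast hkN
    have hk1' : (1:ℤ) ≤ k := by exact_mod_cast hk1
    have hk2' : (k:ℤ) ≤ (N:ℤ) - 1 := by
      have : (k:ℤ) ≤ ((N - 1 : ℕ) : ℤ) := by exact_mod_cast hk2
      omega
    have hN' : (2:ℤ) ≤ N := by exact_mod_cast hN
    rcases le_or_gt n 0 with h | h
    · nlinarith
    · nlinarith
  have hzN : ζ ^ N = 1 := by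
    rw [hζ, ← Complex.exp_nat_mul]
    have : (N:ℂ) * ((θ:ℂ) * Complex.I) = (k:ℤ) * (2 * Real.pi * Complex.I) := by
      have hNc : (N:ℂ) ≠ 0 := by exact_mod_cast hN0
      rw [hθ]; push_cast; field_simp
    rw [this, Complex.exp_int_mul_two_pi_mul_I]
  have hsum : ∑ j ∈ Finset.range N, ζ ^ j = 0 := by
    rw [geom_sum_eq hz1, hzN]; simp
  have hre : ∀ j : ℕ, (ζ ^ j).re = Real.cos (2 * Real.pi * j * k / N) := by
    intro j
    rw [hζ, ← Complex.exp_nat_mul]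
    have : (j:ℂ) * ((θ:ℂ) * Complex.I) = ((2 * Real.pi * j * k / N : ℝ) : ℂ) * Complex.I := by
      rw [hθ]; push_cast; ring
    rw [this, Complex.exp_ofReal_mul_I_re]
  calc ∑ j ∈ Finset.range N, Real.cos (2 * Real.pi * j * k / N)
      = ∑ j ∈ Finset.range N, (ζ ^ j).re := by
        exact Finset.sum_congr rfl fun j _ => (hre j).symm
    _ = (∑ j ∈ Finset.range N, ζ ^ j).re := by rw [Complex.re_sum]
    _ = 0 := by rw [hsum]; simp

lemma cos_sum_Icc (N k : ℕ) (hN : 2 ≤ N) (hk1 : 1 ≤ k) (hk2 : k ≤ N - 1) :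
    ∑ j ∈ Finset.Icc 1 (N - 1), Real.cos (2 * Real.pi * j * k / N) = -1 := by
  have h := cos_sum_range N k hN hk1 hk2
  have hins : Finset.range N = insert 0 (Finset.Icc 1 (N - 1)) := by
    ext x; simp [Finset.mem_range, Finset.mem_Icc]; omega
  rw [hins, Finset.sum_insert (by simp)] at h
  simp at h
  linarith

/-- For a = 2, ξ_p(1) = (1/2)∑_{j=1}^{N−1} sin(πj(2p+1)/N)/sin(πj/N) = (N − (2p+1))/2;
in particular ξ_p(1) ≠ 0 iff p ≠ (N−1)/2. -/
theorem xi_p_vortex_value (N : ℕ) (hN : 2 ≤ N) (p : ℤ) (hp0 : 0 ≤ p) (hpN : p ≤ (N : ℤ) - 1) :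
    (1 / 2) * (∑ j ∈ Finset.Icc 1 (N - 1),
        Real.sin (Real.pi * j * (2 * p + 1) / N) / Real.sin (Real.pi * j / N))
      = ((N : ℝ) - (2 * p + 1)) / 2
    ∧ ((1 / 2) * (∑ j ∈ Finset.Icc 1 (N - 1),
          Real.sin (Real.pi * j * (2 * p + 1) / N) / Real.sin (Real.pi * j / N)) ≠ 0
        ↔ (p : ℝ) ≠ ((N : ℝ) - 1) / 2) := by
  lift p to ℕ using hp0 with m
  have hmN : m ≤ N - 1 := by
    have : (m:ℤ) ≤ (N:ℤ) - 1 := hpN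
    omega
  have hN0 : (N:ℝ) ≠ 0 := by positivity
  have hsin_ne : ∀ j ∈ Finset.Icc 1 (N-1), Real.sin (Real.pi * j / N) ≠ 0 := by
    intro j hj
    simp [Finset.mem_Icc] at hj
    have hjN : (j:ℝ) < N := by
      have : j < N := by omega
      exact_mod_cast this
    have hj0 : (0:ℝ) < j := by
      have : 0 < j := by omega
      exact_mod_cast this
    have hNpos : (0:ℝ) < N := by positivity
    apply ne_of_gt
    apply Real.sin_pos_of_pos_of_lt_pi
    · positivity
    · rw [div_lt_iff₀ hNpos]
      nlinarith [Real.pi_pos]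
  have hterm : ∀ j ∈ Finset.Icc 1 (N-1),
      Real.sin (Real.pi * j * (2 * (m:ℝ) + 1) / N) / Real.sin (Real.pi * j / N)
        = 1 + 2 * ∑ k ∈ Finset.Icc 1 m, Real.cos (2 * Real.pi * j * k / N) := by
    intro j hj
    have h1 : Real.pi * j * (2 * (m:ℝ) + 1) / N = (2 * m + 1) * (Real.pi * j / N) := by
      ring
    rw [h1, dirichlet_ker m (Real.pi * j / N), mul_comm,
      mul_div_assoc, div_self (hsin_ne j hj), mul_one]
    congr 1
    congr 1
    apply Finset.sum_congr rfl
    intro k _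
    congr 1
    ring
  have hsum : ∑ j ∈ Finset.Icc 1 (N-1),
      Real.sin (Real.pi * j * (2 * (m:ℝ) + 1) / N) / Real.sin (Real.pi * j / N)
        = (N:ℝ) - (2 * m + 1) := by
    rw [Finset.sum_congr rfl hterm, Finset.sum_add_distrib]
    have hcard : ∑ _j ∈ Finset.Icc 1 (N-1), (1:ℝ) = (N:ℝ) - 1 := by
      rw [Finset.sum_const, Nat.card_Icc]
      have : N - 1 + 1 - 1 = N - 1 := by omega
      rw [this]
      have : ((N - 1 : ℕ) : ℝ) = (N:ℝ) - 1 := by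
        push_cast [Nat.cast_sub (by omega : 1 ≤ N)]; ring
      simp [this]
    rw [hcard]
    have hswap : ∑ j ∈ Finset.Icc 1 (N-1), (2 * ∑ k ∈ Finset.Icc 1 m,
        Real.cos (2 * Real.pi * j * k / N)) = -(2 * m) := by
      rw [← Finset.mul_sum, Finset.sum_comm]
      have : ∀ k ∈ Finset.Icc 1 m, ∑ j ∈ Finset.Icc 1 (N-1),
          Real.cos (2 * Real.pi * j * k / N) = -1 := by
        intro k hk
        simp [Finset.mem_Icc] at hk
        exact cos_sum_Icc N k hN hk.1 (le_trans hk.2 hmN)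
      rw [Finset.sum_congr rfl this, Finset.sum_const, Nat.card_Icc]
      simp
    rw [hswap]
    ring
  push_cast
  constructor
  · rw [hsum]; ring
  · rw [hsum]
    constructor
    · intro h hc
      apply h
      field_simp
      linarith [hc]
    · intro h hc
      apply h
      field_simp at hc
      linarith [hc]
end

section
/- Let N ≥ 3, a ≥ 2, r₁, r₂ > 0, h₁ ≠ h₂ real, x = r₂/r₁, k = |h₂ − h₁|/r₁ > 0, θ = 2π/N, and p an integer with 1 ≤ p ≤ N−1. Then the sum ∑_{j=1}^N cos(jθp)/(1 − 2x cos(jθ) + x² + k²)^{a/2} is strictly positive. -/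
open Real Finset MeasureTheory Set

lemma cos_geom_sum (N : ℕ) (hN : 0 < N) (m : ℤ) :
    ∑ j ∈ Finset.Icc 1 N, Real.cos ((j : ℝ) * (2 * Real.pi / N) * m) =
      if (N : ℤ) ∣ m then (N : ℝ) else 0 := by
  have hNR : (N : ℝ) ≠ 0 := Nat.cast_ne_zero.mpr hN.ne'
  have hNC : (N : ℂ) ≠ 0 := Nat.cast_ne_zero.mpr hN.ne'
  set u : ℂ := Complex.exp ((2 * Real.pi / N * m : ℝ) * Complex.I) with hu
  have hterm : ∀ j : ℕ, Real.cos ((j : ℝ) * (2 * Real.pi / N) * m) = (u ^ j).re := by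
    intro j
    rw [hu, ← Complex.exp_nat_mul]
    rw [show ((j : ℂ) * ((2 * Real.pi / N * m : ℝ) * Complex.I))
        = (((j : ℝ) * (2 * Real.pi / N) * m : ℝ) : ℂ) * Complex.I by push_cast; ring]
    rw [Complex.exp_ofReal_mul_I_re]
  have hsum : ∑ j ∈ Finset.Icc 1 N, Real.cos ((j : ℝ) * (2 * Real.pi / N) * m)
      = (∑ j ∈ Finset.Icc 1 N, u ^ j).re := by
    rw [Complex.re_sum]
    exact Finset.sum_congr rfl fun j _ => hterm j
  by_cases hdvd : (N : ℤ) ∣ m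
  · obtain ⟨c, rfl⟩ := hdvd
    have hu1 : u = 1 := by
      rw [hu, show ((2 * Real.pi / N * (N * c : ℤ) : ℝ) : ℂ) * Complex.I
          = (c : ℤ) * (2 * Real.pi * Complex.I) by push_cast; field_simp [hNC]]
      exact Complex.exp_int_mul_two_pi_mul_I c
    rw [if_pos ⟨c, rfl⟩, hsum, hu1]
    simp [Nat.card_Icc]
  · have hune : u ≠ 1 := by
      intro h
      rw [hu, Complex.exp_eq_one_iff] at h
      obtain ⟨n, hn⟩ := h
      have : (2 * Real.pi / N * m : ℝ) = n * (2 * Real.pi) := by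
        have := congrArg Complex.im hn
        simpa [Complex.ofReal_mul, Complex.mul_im] using this
      have hm : (m : ℝ) = n * N := by
        field_simp at this
        nlinarith [Real.pi_pos, this]
      exact hdvd ⟨n, by exact_mod_cast (by linarith [hm] : (m : ℝ) = (N : ℝ) * n)⟩
    have huN : u ^ N = 1 := by
      rw [hu, ← Complex.exp_nat_mul,
        show ((N : ℂ) * (((2 * Real.pi / N * m : ℝ) : ℂ) * Complex.I))
          = (m : ℤ) * (2 * Real.pi * Complex.I) by push_cast; field_simp [hNC]]
      exact Complex.exp_int_mul_two_pi_mul_I m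
    have hins : Finset.range (N + 1) = insert 0 (Finset.Icc 1 N) := by
      ext j
      simp [Nat.lt_succ_iff]
      omega
    have hgeom : ∑ j ∈ Finset.range (N + 1), u ^ j = 1 := by
      rw [geom_sum_eq hune, pow_succ, huN, one_mul, div_self (sub_ne_zero.mpr hune)]
    have : ∑ j ∈ Finset.Icc 1 N, u ^ j = 0 := by
      have := hgeom
      rw [hins, Finset.sum_insert (by simp)] at this
      simpa using this
    rw [if_neg hdvd, hsum, this, Complex.zero_re]

noncomputable def trigA (N : ℕ) (n : ℕ) (m : ℤ) : ℝ :=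
  ∑ j ∈ Finset.Icc 1 N, Real.cos ((j : ℝ) * (2 * Real.pi / N) * m)
    * Real.cos ((j : ℝ) * (2 * Real.pi / N)) ^ n

lemma trigA_rec (N : ℕ) (n : ℕ) (m : ℤ) :
    trigA N (n + 1) m = (trigA N n (m + 1) + trigA N n (m - 1)) / 2 := by
  unfold trigA
  rw [← Finset.sum_add_distrib, Finset.sum_div]
  refine Finset.sum_congr rfl fun j _ => ?_
  have h1 : ((j : ℝ) * (2 * Real.pi / N) * ((m : ℝ) + 1))
      = (j : ℝ) * (2 * Real.pi / N) * m + (j : ℝ) * (2 * Real.pi / N) := by ring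
  have h2 : ((j : ℝ) * (2 * Real.pi / N) * ((m : ℝ) - 1))
      = (j : ℝ) * (2 * Real.pi / N) * m - (j : ℝ) * (2 * Real.pi / N) := by ring
  push_cast
  rw [h1, h2, Real.cos_add, Real.cos_sub]
  ring

lemma trigA_zero (N : ℕ) (hN : 0 < N) (m : ℤ) :
    trigA N 0 m = if (N : ℤ) ∣ m then (N : ℝ) else 0 := by
  unfold trigA
  simp only [pow_zero, mul_one]
  exact cos_geom_sum N hN m

lemma trigA_nonneg (N : ℕ) (hN : 0 < N) : ∀ n (m : ℤ), 0 ≤ trigA N n m := by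
  intro n
  induction n with
  | zero => intro m; rw [trigA_zero N hN]; split <;> positivity
  | succ n ih => intro m; rw [trigA_rec]; have := ih (m + 1); have := ih (m - 1); linarith

lemma trigA_pos (N : ℕ) (hN : 0 < N) : ∀ n : ℕ, 0 < trigA N n (n : ℤ) := by
  intro n
  induction n with
  | zero =>
    rw [trigA_zero N hN]
    rw [if_pos (by exact_mod_cast dvd_zero (N:ℤ))]
    exact_mod_cast hN
  | succ n ih =>
    rw [show ((n + 1 : ℕ) : ℤ) = (n : ℤ) + 1 by push_cast; ring, trigA_rec]
    have h1 := trigA_nonneg N hN n ((n : ℤ) + 1 + 1)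
    have h2 : trigA N n ((n : ℤ) + 1 - 1) = trigA N n n := by norm_num
    rw [h2]
    linarith

lemma exp_cos_sum_pos (N : ℕ) (hN : 0 < N) (p : ℕ) {w : ℝ} (hw : 0 < w) :
    0 < ∑ j ∈ Finset.Icc 1 N, Real.cos ((j : ℝ) * (2 * Real.pi / N) * p)
      * Real.exp (w * Real.cos ((j : ℝ) * (2 * Real.pi / N))) := by
  have hexp : ∀ y : ℝ, HasSum (fun n : ℕ => y ^ n / (Nat.factorial n)) (Real.exp y) := by
    intro y
    refine (Real.summable_pow_div_factorial y).hasSum_iff.mpr ?_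
    rw [Real.exp_eq_exp_ℝ, NormedSpace.exp_eq_tsum_div]
  have hj : ∀ j ∈ Finset.Icc 1 N,
      HasSum (fun n : ℕ => Real.cos ((j : ℝ) * (2 * Real.pi / N) * p)
          * ((w * Real.cos ((j : ℝ) * (2 * Real.pi / N))) ^ n / (Nat.factorial n)))
        (Real.cos ((j : ℝ) * (2 * Real.pi / N) * p)
          * Real.exp (w * Real.cos ((j : ℝ) * (2 * Real.pi / N)))) :=
    fun j _ => (hexp _).mul_left _
  have hS := hasSum_sum hj
  have hg : ∀ n : ℕ, (∑ j ∈ Finset.Icc 1 N, Real.cos ((j : ℝ) * (2 * Real.pi / N) * p)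
      * ((w * Real.cos ((j : ℝ) * (2 * Real.pi / N))) ^ n / (Nat.factorial n)))
      = w ^ n / (Nat.factorial n) * ∑ j ∈ Finset.Icc 1 N,
        Real.cos ((j : ℝ) * (2 * Real.pi / N) * ((p : ℤ) : ℝ))
          * Real.cos ((j : ℝ) * (2 * Real.pi / N)) ^ n := by
    intro n
    rw [Finset.mul_sum]
    refine Finset.sum_congr rfl fun j _ => ?_
    rw [mul_pow]
    push_cast
    ring
  rw [← hS.tsum_eq]
  refine Summable.tsum_pos hS.summable (fun n => ?_) p ?_
  · rw [hg n]
    exact mul_nonneg (by positivity) (trigA_nonneg N hN n (p : ℤ))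
  · rw [hg p]
    exact mul_pos (by positivity) (by simpa [trigA] using trigA_pos N hN p)

lemma main_aux (N : ℕ) (hN : 0 < N) (p : ℕ) (x k s : ℝ)
    (hx0 : 0 < x) (hk0 : 0 < k) (hs0 : 0 < s) :
    0 < ∑ j ∈ Finset.Icc 1 N,
      Real.cos ((j : ℝ) * (2 * Real.pi / N) * p)
        / (1 - 2 * x * Real.cos ((j : ℝ) * (2 * Real.pi / N)) + x ^ 2 + k ^ 2) ^ s := by
  have hDpos : ∀ j : ℕ, 0 < 1 - 2 * x * Real.cos ((j : ℝ) * (2 * Real.pi / N)) + x ^ 2 + k ^ 2 := by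
    intro j
    have h1 : Real.cos ((j : ℝ) * (2 * Real.pi / N)) ≤ 1 := Real.cos_le_one _
    nlinarith [sq_nonneg (1 - x), mul_nonneg hx0.le (sub_nonneg.mpr h1), pow_pos hk0 2]
  -- integrability of the gamma-type integrand
  have hint : ∀ r : ℝ, 0 < r →
      IntegrableOn (fun t : ℝ => t ^ (s - 1) * Real.exp (-(r * t))) (Ioi 0) := by
    intro r hr
    have h2 : IntegrableOn (fun t : ℝ => Real.exp (-(r * t)) * (r * t) ^ (s - 1)) (Ioi 0) := by
      have h := (integrableOn_Ioi_comp_mul_left_iff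
        (fun u : ℝ => Real.exp (-u) * u ^ (s - 1)) 0 hr).mpr
      rw [mul_zero] at h
      exact h (Real.GammaIntegral_convergent hs0)
    have h3 : IntegrableOn
        (fun t : ℝ => (r ^ (s - 1))⁻¹ * (Real.exp (-(r * t)) * (r * t) ^ (s - 1))) (Ioi 0) :=
      h2.const_mul _
    refine h3.congr_fun (fun t ht => ?_) measurableSet_Ioi
    have ht0 : 0 < t := ht
    beta_reduce
    rw [Real.mul_rpow hr.le ht0.le]
    have : (r : ℝ) ^ (s - 1) ≠ 0 := (Real.rpow_pos_of_pos hr _).ne'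
    field_simp
  have hintj : ∀ j ∈ Finset.Icc 1 N, IntegrableOn
      (fun t : ℝ => Real.cos ((j : ℝ) * (2 * Real.pi / N) * p)
        * (t ^ (s - 1) * Real.exp (-((1 - 2 * x * Real.cos ((j : ℝ) * (2 * Real.pi / N))
            + x ^ 2 + k ^ 2) * t)))) (Ioi 0) :=
    fun j _ => (hint _ (hDpos j)).const_mul _
  -- the key identity
  have key : ∀ j : ℕ, Real.Gamma s * (Real.cos ((j : ℝ) * (2 * Real.pi / N) * p)
      / (1 - 2 * x * Real.cos ((j : ℝ) * (2 * Real.pi / N)) + x ^ 2 + k ^ 2) ^ s)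
      = ∫ t in Ioi (0:ℝ), Real.cos ((j : ℝ) * (2 * Real.pi / N) * p)
        * (t ^ (s - 1) * Real.exp (-((1 - 2 * x * Real.cos ((j : ℝ) * (2 * Real.pi / N))
            + x ^ 2 + k ^ 2) * t))) := by
    intro j
    rw [MeasureTheory.integral_const_mul,
      Real.integral_rpow_mul_exp_neg_mul_Ioi hs0 (hDpos j),
      one_div, Real.inv_rpow (hDpos j).le, div_eq_mul_inv]
    ring
  have hGamma : 0 < Real.Gamma s := Real.Gamma_pos_of_pos hs0
  have hmain : 0 < Real.Gamma s * ∑ j ∈ Finset.Icc 1 N,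
      Real.cos ((j : ℝ) * (2 * Real.pi / N) * p)
        / (1 - 2 * x * Real.cos ((j : ℝ) * (2 * Real.pi / N)) + x ^ 2 + k ^ 2) ^ s := by
    rw [Finset.mul_sum]
    rw [Finset.sum_congr rfl fun j _ => key j]
    rw [← MeasureTheory.integral_finset_sum _ hintj]
    -- positivity of the integral
    have hFpos : ∀ t ∈ Ioi (0:ℝ), 0 < ∑ j ∈ Finset.Icc 1 N,
        Real.cos ((j : ℝ) * (2 * Real.pi / N) * p)
          * (t ^ (s - 1) * Real.exp (-((1 - 2 * x * Real.cos ((j : ℝ) * (2 * Real.pi / N))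
              + x ^ 2 + k ^ 2) * t))) := by
      intro t ht
      have ht0 : (0:ℝ) < t := ht
      have hfac : ∀ j : ℕ,
          Real.cos ((j : ℝ) * (2 * Real.pi / N) * p)
            * (t ^ (s - 1) * Real.exp (-((1 - 2 * x * Real.cos ((j : ℝ) * (2 * Real.pi / N))
                + x ^ 2 + k ^ 2) * t)))
          = t ^ (s - 1) * Real.exp (-((1 + x ^ 2 + k ^ 2) * t))
            * (Real.cos ((j : ℝ) * (2 * Real.pi / N) * p)
              * Real.exp ((2 * x * t) * Real.cos ((j : ℝ) * (2 * Real.pi / N)))) := by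
        intro j
        have hcomb : Real.exp (-((1 + x ^ 2 + k ^ 2) * t))
            * Real.exp ((2 * x * t) * Real.cos ((j : ℝ) * (2 * Real.pi / N)))
            = Real.exp (-((1 - 2 * x * Real.cos ((j : ℝ) * (2 * Real.pi / N))
                + x ^ 2 + k ^ 2) * t)) := by
          rw [← Real.exp_add]; congr 1; ring
        rw [← hcomb]
        ring
      rw [Finset.sum_congr rfl fun j _ => hfac j, ← Finset.mul_sum]
      have hw : (0:ℝ) < 2 * x * t := by positivity
      exact mul_pos (by positivity) (exp_cos_sum_pos N hN p hw)
    rw [MeasureTheory.setIntegral_pos_iff_support_of_nonneg_ae]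
    · refine lt_of_lt_of_le ?_ (measure_mono fun t (ht : t ∈ Ioi (0:ℝ)) =>
        Set.mem_inter (hFpos t ht).ne' ht)
      simp [Real.volume_Ioi]
    · filter_upwards [MeasureTheory.ae_restrict_mem measurableSet_Ioi] with t ht
        using (hFpos t ht).le
    · exact MeasureTheory.integrable_finset_sum _ hintj
  by_contra h
  push_neg at h
  nlinarith


/-- For N ≥ 3, a ≥ 2, positive radii, h₁ ≠ h₂, x = r₂/r₁, k = |h₂ − h₁|/r₁ and
1 ≤ p ≤ N−1, ∑_{j=1}^N cos(jθp)/(1 − 2x cos(jθ) + x² + k²)^{a/2} > 0, θ = 2π/N. -/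
theorem spatial_sum_pos (N : ℕ) (hN : 3 ≤ N) (a : ℝ) (ha : 2 ≤ a)
    (r₁ r₂ h₁ h₂ : ℝ) (hr₁ : 0 < r₁) (hr₂ : 0 < r₂) (hh : h₁ ≠ h₂)
    (x k : ℝ) (hx : x = r₂ / r₁) (hk : k = |h₂ - h₁| / r₁)
    (p : ℕ) (hp1 : 1 ≤ p) (hp2 : p ≤ N - 1) :
    0 < ∑ j ∈ Finset.Icc 1 N,
      Real.cos ((j : ℝ) * (2 * Real.pi / N) * p)
        / (1 - 2 * x * Real.cos ((j : ℝ) * (2 * Real.pi / N)) + x ^ 2 + k ^ 2) ^ (a / 2) := by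
  have hN0 : 0 < N := by omega
  have hx0 : 0 < x := by rw [hx]; exact div_pos hr₂ hr₁
  have hk0 : 0 < k := by
    rw [hk]
    exact div_pos (abs_pos.mpr (sub_ne_zero.mpr (Ne.symm hh))) hr₁
  have hs0 : 0 < a / 2 := by linarith
  exact main_aux N hN0 p x k (a / 2) hx0 hk0 hs0
end
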